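/- Let A and A' be complex n×n matrices. Then the map ε ↦ exp(A + εA') (matrix exponential) is differentiable at ε = 0, and its derivative equals [0 Iₙ] · exp(M) · [Iₙ; 0], where M is the 2n×2n block lower-triangular matrix with blocks M₁₁ = A, M₁₂ = 0, M₂₁ = A', M₂₂ = A; that is, the derivative is the lower-left n×n block of exp(M). -/

import Mathlib

open Matrix NormedSpace

attribute [local instance] Matrix.normedAddCommGroup Matrix.normedSpace

lemma my_exp_reindex {l m : Type*} [Fintype l] [DecidableEq l] [Fintype m] [DecidableEq m]
    (e : l ≃ m) (B : Matrix l l ℂ) :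
    exp (reindex e e B) = reindex e e (exp B) := by
  letI : NormedRing (Matrix l l ℂ) := Matrix.linftyOpNormedRing
  letI : NormedAlgebra ℂ (Matrix l l ℂ) := Matrix.linftyOpNormedAlgebra
  letI : NormedRing (Matrix m m ℂ) := Matrix.linftyOpNormedRing
  letI : NormedAlgebra ℂ (Matrix m m ℂ) := Matrix.linftyOpNormedAlgebra
  letI : NormedAlgebra ℚ (Matrix l l ℂ) := NormedAlgebra.restrictScalars ℚ ℂ _
  haveI : @CompleteSpace (Matrix l l ℂ)
        (@PseudoMetricSpace.toUniformSpace _ (inferInstance : NormedRing (Matrix l l ℂ)).toPseudoMetricSpace) := by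
      letI : NormedAddCommGroup (Matrix l l ℂ) := Matrix.linftyOpNormedAddCommGroup
      exact FiniteDimensional.complete ℂ _
  have hcont : Continuous (reindexAlgEquiv ℂ ℂ e) :=
    (reindexAlgEquiv ℂ ℂ e).toLinearMap.continuous_of_finiteDimensional
  have := map_exp (reindexAlgEquiv ℂ ℂ e) hcont B
  rw [reindexAlgEquiv_apply, reindexAlgEquiv_apply] at this
  exact this.symm

lemma exp_fromBlocks_diag {n : ℕ} (X Y : Matrix (Fin n) (Fin n) ℂ) :
    exp (fromBlocks X 0 0 Y) = fromBlocks (exp X) 0 0 (exp Y) := by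
  classical
  let e : Fin n × Bool ≃ Fin n ⊕ Fin n :=
    (Equiv.prodComm _ _).trans (Equiv.boolProdEquivSum _)
  have h1 : ∀ (X Y : Matrix (Fin n) (Fin n) ℂ),
      reindex e e (blockDiagonal (fun b => bif b then Y else X)) = fromBlocks X 0 0 Y := by
    intro X Y
    ext i j
    cases i <;> cases j <;>
      simp [e, blockDiagonal_apply, Equiv.boolProdEquivSum]
  rw [← h1 X Y, my_exp_reindex, Matrix.exp_blockDiagonal]
  have hpi : (exp fun b => bif b then Y else X) = fun b => bif b then exp Y else exp X := by
    letI : NormedRing (Matrix (Fin n) (Fin n) ℂ) := Matrix.linftyOpNormedRing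
    letI : NormedAlgebra ℂ (Matrix (Fin n) (Fin n) ℂ) := Matrix.linftyOpNormedAlgebra
    letI : NormedAlgebra ℚ (Matrix (Fin n) (Fin n) ℂ) := NormedAlgebra.restrictScalars ℚ ℂ _
    haveI : @CompleteSpace (Matrix (Fin n) (Fin n) ℂ)
        (@PseudoMetricSpace.toUniformSpace _ (inferInstance : NormedRing (Matrix (Fin n) (Fin n) ℂ)).toPseudoMetricSpace) := by
      letI : NormedAddCommGroup (Matrix (Fin n) (Fin n) ℂ) := Matrix.linftyOpNormedAddCommGroup
      exact FiniteDimensional.complete ℂ _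
    funext b
    refine (Pi.coe_exp _ b).trans ?_
    cases b <;> rfl
  rw [hpi]
  exact h1 (exp X) (exp Y)

lemma key_block {n : ℕ} (A A' : Matrix (Fin n) (Fin n) ℂ) {ε : ℝ} (hε : ε ≠ 0) :
    (exp (fromBlocks (A + ε • A') 0 A' A)).toBlocks₂₁
      = ε⁻¹ • (exp (A + ε • A') - exp A) := by
  classical
  set X := A + ε • A' with hX
  set c : ℝ := ε⁻¹ with hc
  let U : (Matrix (Fin n ⊕ Fin n) (Fin n ⊕ Fin n) ℂ)ˣ :=
    { val := fromBlocks 1 0 (c • 1) 1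
      inv := fromBlocks 1 0 (-(c • 1)) 1
      val_inv := by
        rw [Matrix.fromBlocks_multiply]
        simp [Matrix.fromBlocks_one]
      inv_val := by
        rw [Matrix.fromBlocks_multiply]
        simp [Matrix.fromBlocks_one] }
  have hconj : fromBlocks X 0 A' A
      = (U : Matrix (Fin n ⊕ Fin n) (Fin n ⊕ Fin n) ℂ) * fromBlocks X 0 0 A
        * ((U⁻¹ : (Matrix (Fin n ⊕ Fin n) (Fin n ⊕ Fin n) ℂ)ˣ) : Matrix (Fin n ⊕ Fin n) (Fin n ⊕ Fin n) ℂ) := by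
    show _ = (fromBlocks 1 0 (c • 1) 1 * fromBlocks X 0 0 A) * fromBlocks 1 0 (-(c • 1)) 1
    rw [Matrix.fromBlocks_multiply, Matrix.fromBlocks_multiply]
    congr 1 <;> simp [Matrix.smul_mul, Matrix.mul_smul, hX, smul_smul, hc,
      inv_mul_cancel₀ hε, smul_sub, add_sub_cancel_left]
  rw [hconj, Matrix.exp_units_conj, exp_fromBlocks_diag]
  show ((fromBlocks 1 0 (c • 1) 1 * fromBlocks (exp X) 0 0 (exp A))
      * fromBlocks 1 0 (-(c • 1)) 1).toBlocks₂₁ = _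
  rw [Matrix.fromBlocks_multiply, Matrix.fromBlocks_multiply]
  simp [Matrix.smul_mul, Matrix.mul_smul, smul_sub, sub_eq_add_neg]

theorem stmt_2 {n : ℕ} (A A' : Matrix (Fin n) (Fin n) ℂ) :
    HasDerivAt (fun ε : ℝ => NormedSpace.exp (A + ε • A'))
      ((NormedSpace.exp (Matrix.fromBlocks A 0 A' A)).toBlocks₂₁) 0 := by
  classical
  set G : ℝ → Matrix (Fin n) (Fin n) ℂ :=
    fun ε => (exp (fromBlocks (A + ε • A') 0 A' A)).toBlocks₂₁ with hG
  have hGcont : Continuous G := by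
    letI : NormedRing (Matrix (Fin n ⊕ Fin n) (Fin n ⊕ Fin n) ℂ) := Matrix.linftyOpNormedRing
    letI : NormedAlgebra ℂ (Matrix (Fin n ⊕ Fin n) (Fin n ⊕ Fin n) ℂ) :=
      Matrix.linftyOpNormedAlgebra
    letI : NormedAlgebra ℚ (Matrix (Fin n ⊕ Fin n) (Fin n ⊕ Fin n) ℂ) :=
      NormedAlgebra.restrictScalars ℚ ℂ _
    haveI : @CompleteSpace (Matrix (Fin n ⊕ Fin n) (Fin n ⊕ Fin n) ℂ)
        (@PseudoMetricSpace.toUniformSpace _ (inferInstance : NormedRing (Matrix (Fin n ⊕ Fin n) (Fin n ⊕ Fin n) ℂ)).toPseudoMetricSpace) := by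
      letI : NormedAddCommGroup (Matrix (Fin n ⊕ Fin n) (Fin n ⊕ Fin n) ℂ) := Matrix.linftyOpNormedAddCommGroup
      exact FiniteDimensional.complete ℂ _
    have h1 : Continuous fun ε : ℝ => fromBlocks (A + ε • A') 0 A' A := by
      apply Continuous.matrix_fromBlocks
      · exact continuous_const.add (continuous_id.smul continuous_const)
      all_goals exact continuous_const
    have h2 : Continuous fun ε : ℝ => exp (fromBlocks (A + ε • A') 0 A' A) :=
      exp_continuous.comp h1
    exact h2.matrix_submatrix _ _
  have hG0 : G 0 = (exp (fromBlocks A 0 A' A)).toBlocks₂₁ := by simp [hG]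
  refine hasDerivAt_iff_tendsto_slope.mpr ?_
  have htend : Filter.Tendsto G (nhdsWithin 0 {(0:ℝ)}ᶜ) (nhds (G 0)) :=
    (hGcont.tendsto 0).mono_left nhdsWithin_le_nhds
  rw [← hG0]
  refine htend.congr' ?_
  filter_upwards [self_mem_nhdsWithin] with ε (hε : ε ≠ 0)
  rw [hG, slope_def_module]
  simp only []
  rw [key_block A A' hε]
  simp [smul_sub]
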